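/- Trajectories starting in the interior of an invariant set cannot reach its boundary in finite time: let M : ℝ → Set E be a family with each M t nonempty and compact, invariant for the reachable-set operator, i.e. Φ t t₀ (M t₀) = M t for all t₀ ≤ t. Then for every t₀ < t, every admissible control ξ ∈ 𝒰, and every trajectory x with control ξ such that x t₀ ∈ interior (M t₀), one has x t ∉ frontier (M t). -/

import Mathlib

open MeasureTheory Set Metric
open scoped RealInnerProductSpace

noncomputable section

abbrev Euc (d : ℕ) : Type := EuclideanSpace ℝ (Fin d)

/-- The set of admissible controls: measurable functions with values in the closed unit ball. -/
def ctrlSet (d : ℕ) : Set (ℝ → Euc d) :=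
  {ξ | Measurable ξ ∧ ∀ s, ‖ξ s‖ ≤ 1}

/-- A (Carathéodory) trajectory of `x' = f(t,x) + ρ ξ(t)` with control `ξ`. -/
def IsTrajectory (d : ℕ) (f : ℝ → Euc d → Euc d) (ρ : ℝ) (ξ x : ℝ → Euc d) : Prop :=
  Continuous x ∧ ∀ t₀ t : ℝ, x t = x t₀ + ∫ s in t₀..t, (f s (x s) + ρ • ξ s)

/-- The reachable-set operator of the differential inclusion `x' ∈ closedBall (f t x) ρ`. -/
def reachNL (d : ℕ) (f : ℝ → Euc d → Euc d) (ρ t t₀ : ℝ) (S : Set (Euc d)) : Set (Euc d) :=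
  {y | ∃ ξ ∈ ctrlSet d, ∃ x : ℝ → Euc d, IsTrajectory d f ρ ξ x ∧ x t₀ ∈ S ∧ y = x t}


namespace AvoidAux
open Function intervalIntegral
open scoped Nat
structure Setup (d : ℕ) where
  f : ℝ → Euc d → Euc d
  ρ : ℝ
  ξ : ℝ → Euc d
  l : NNReal
  hf : Continuous fun p : ℝ × Euc d => f p.1 p.2
  hlip : ∀ t : ℝ, LipschitzWith l (f t)
  hξm : Measurable ξ
  hξb : ∀ s : ℝ, ‖ξ s‖ ≤ 1
  a : ℝ
  b : ℝ
  c : ℝ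
  hab : a ≤ b
  hc : c ∈ Set.Icc a b

namespace Setup
variable {d : ℕ} (S : Setup d)

def rhs (w : ℝ → Euc d) (s : ℝ) : Euc d := S.f s (w s) + S.ρ • S.ξ s

lemma rhs_intInt {w : ℝ → Euc d} (hw : Continuous w) (p q : ℝ) :
    IntervalIntegrable (S.rhs w) volume p q := by
  apply IntervalIntegrable.add
  · exact (S.hf.comp (continuous_id.prodMk hw)).intervalIntegrable p q
  · rw [intervalIntegrable_iff]
    refine MeasureTheory.Integrable.mono'
      (g := fun _ => |S.ρ|) (integrableOn_const ?_)
      ((S.hξm.const_smul S.ρ).aestronglyMeasurable.restrict) ?_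
    · rw [Set.uIoc]; exact measure_Ioc_lt_top.ne
    · refine Filter.Eventually.of_forall fun s => ?_
      rw [norm_smul, Real.norm_eq_abs]
      calc |S.ρ| * ‖S.ξ s‖ ≤ |S.ρ| * 1 := by gcongr; exact S.hξb s
        _ = |S.ρ| := mul_one _

def ext (u : C(Set.Icc S.a S.b, Euc d)) : ℝ → Euc d :=
  fun s => u (Set.projIcc S.a S.b S.hab s)

lemma continuous_ext (u : C(Set.Icc S.a S.b, Euc d)) : Continuous (S.ext u) :=
  u.continuous.comp continuous_projIcc

lemma ext_of_mem (u : C(Set.Icc S.a S.b, Euc d)) {s : ℝ} (hs : s ∈ Set.Icc S.a S.b) :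
    S.ext u s = u ⟨s, hs⟩ := by
  simp [ext, Set.projIcc_of_mem S.hab hs]

def next (y : Euc d) (u : C(Set.Icc S.a S.b, Euc d)) : C(Set.Icc S.a S.b, Euc d) :=
  ⟨fun τ => y + ∫ s in S.c..(τ : ℝ), S.rhs (S.ext u) s,
   continuous_const.add ((intervalIntegral.continuous_primitive
     (fun p q => S.rhs_intInt (S.continuous_ext u) p q) S.c).comp continuous_subtype_val)⟩

lemma next_apply (y : Euc d) (u : C(Set.Icc S.a S.b, Euc d)) (τ : Set.Icc S.a S.b) :
    S.next y u τ = y + ∫ s in S.c..(τ : ℝ), S.rhs (S.ext u) s := rfl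

lemma dist_next_apply_le_of_le {u v : C(Set.Icc S.a S.b, Euc d)} {y : Euc d} {n : ℕ} {D : ℝ}
    (h : ∀ τ : Set.Icc S.a S.b,
      dist (u τ) (v τ) ≤ ((S.l : ℝ) * |(τ : ℝ) - S.c|) ^ n / n ! * D)
    (τ : Set.Icc S.a S.b) :
    dist (S.next y u τ) (S.next y v τ) ≤
      ((S.l : ℝ) * |(τ : ℝ) - S.c|) ^ (n + 1) / (n + 1)! * D := by
  simp only [dist_eq_norm, next_apply, add_sub_add_left_eq_sub,
    ← intervalIntegral.integral_sub (S.rhs_intInt (S.continuous_ext u) _ _)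
      (S.rhs_intInt (S.continuous_ext v) _ _),
    norm_integral_eq_norm_integral_uIoc] at h ⊢
  calc
    ‖∫ s in Set.uIoc S.c (τ : ℝ), (S.rhs (S.ext u) s - S.rhs (S.ext v) s)‖ ≤
        ∫ s in Set.uIoc S.c (τ : ℝ), (S.l : ℝ) * (((S.l : ℝ) * |s - S.c|) ^ n / n ! * D) := by
      refine norm_integral_le_of_norm_le (Continuous.integrableOn_uIoc (by fun_prop)) ?_
      refine (ae_restrict_mem measurableSet_Ioc).mono fun s hs => ?_
      have hsmem : s ∈ Set.Icc S.a S.b :=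
        uIcc_subset_Icc S.hc τ.2 (Ioc_subset_Icc_self hs)
      have heq : S.rhs (S.ext u) s - S.rhs (S.ext v) s
          = S.f s (S.ext u s) - S.f s (S.ext v s) := by
        simp [rhs]
      rw [heq, S.ext_of_mem u hsmem, S.ext_of_mem v hsmem, ← dist_eq_norm]
      refine ((S.hlip s).dist_le_mul _ _).trans ?_
      have := h ⟨s, hsmem⟩
      rw [← dist_eq_norm] at this
      exact mul_le_mul_of_nonneg_left this S.l.coe_nonneg
    _ = ((S.l : ℝ) * |(τ : ℝ) - S.c|) ^ (n + 1) / (n + 1)! * D := by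
      simp_rw [mul_pow, div_eq_mul_inv, mul_assoc, MeasureTheory.integral_const_mul,
        MeasureTheory.integral_mul_const, integral_pow_abs_sub_uIoc, div_eq_mul_inv,
        pow_succ' (S.l : ℝ), Nat.factorial_succ, Nat.cast_mul, Nat.cast_succ, mul_inv, mul_assoc]

lemma dist_iterate_next_apply_le (y : Euc d) (u v : C(Set.Icc S.a S.b, Euc d)) (n : ℕ)
    (τ : Set.Icc S.a S.b) :
    dist ((S.next y)^[n] u τ) ((S.next y)^[n] v τ) ≤
      ((S.l : ℝ) * |(τ : ℝ) - S.c|) ^ n / n ! * dist u v := by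
  induction n generalizing τ with
  | zero =>
    rw [pow_zero, Nat.factorial_zero, Nat.cast_one, div_one, one_mul]
    exact ContinuousMap.dist_apply_le_dist τ
  | succ n ihn =>
    rw [iterate_succ_apply', iterate_succ_apply']
    exact S.dist_next_apply_le_of_le ihn _

lemma dist_iterate_next_le (y : Euc d) (u v : C(Set.Icc S.a S.b, Euc d)) (n : ℕ) :
    dist ((S.next y)^[n] u) ((S.next y)^[n] v) ≤
      ((S.l : ℝ) * (S.b - S.a)) ^ n / n ! * dist u v := by
  have h0 : (0 : ℝ) ≤ ((S.l : ℝ) * (S.b - S.a)) ^ n / n ! * dist u v :=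
    mul_nonneg (div_nonneg (pow_nonneg (mul_nonneg S.l.coe_nonneg (by linarith [S.hab])) _)
      (Nat.cast_nonneg _)) dist_nonneg
  refine (ContinuousMap.dist_le h0).2 fun τ => (S.dist_iterate_next_apply_le y u v n τ).trans ?_
  have habs : |(τ : ℝ) - S.c| ≤ S.b - S.a := by
    rw [abs_sub_le_iff]
    constructor <;> [linarith [τ.2.2, S.hc.1]; linarith [τ.2.1, S.hc.2]]
  gcongr

lemma exists_contracting :
    ∃ (N : ℕ) (K : NNReal), ∀ y : Euc d, ContractingWith K ((S.next y)^[N]) := by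
  rcases ((FloorSemiring.tendsto_pow_div_factorial_atTop ((S.l : ℝ) * (S.b - S.a))).eventually
    (gt_mem_nhds zero_lt_one)).exists with ⟨N, hN⟩
  have h0 : (0 : ℝ) ≤ ((S.l : ℝ) * (S.b - S.a)) ^ N / N ! :=
    div_nonneg (pow_nonneg (mul_nonneg S.l.coe_nonneg (by linarith [S.hab])) _)
      (Nat.cast_nonneg _)
  exact ⟨N, ⟨_, h0⟩, fun y => ⟨by exact_mod_cast hN,
    LipschitzWith.of_dist_le_mul fun u v => S.dist_iterate_next_le y u v N⟩⟩

lemma exists_fixed (y : Euc d) : ∃ u, S.next y u = u := by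
  haveI : Nonempty C(Set.Icc S.a S.b, Euc d) := ⟨ContinuousMap.const _ 0⟩
  obtain ⟨N, K, hK⟩ := S.exists_contracting
  exact ⟨_, (hK y).isFixedPt_fixedPoint_iterate⟩

lemma fixed_unique {y : Euc d} {u v : C(Set.Icc S.a S.b, Euc d)}
    (hu : S.next y u = u) (hv : S.next y v = v) : u = v := by
  obtain ⟨N, K, hK⟩ := S.exists_contracting
  exact (hK y).fixedPoint_unique' (Function.IsFixedPt.iterate hu N)
    (Function.IsFixedPt.iterate hv N)

lemma dist_next_next (y y' : Euc d) (u : C(Set.Icc S.a S.b, Euc d)) :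
    dist (S.next y u) (S.next y' u) ≤ dist y y' := by
  refine (ContinuousMap.dist_le dist_nonneg).2 fun τ => ?_
  simp only [next_apply]
  exact (dist_add_right y y' _).le

lemma next_lipschitz (y : Euc d) (u v : C(Set.Icc S.a S.b, Euc d)) :
    dist (S.next y u) (S.next y v) ≤ ((S.l : ℝ) * (S.b - S.a)) * dist u v := by
  have := S.dist_iterate_next_le y u v 1
  simpa using this

lemma dist_iterate_y (y y' : Euc d) (u : C(Set.Icc S.a S.b, Euc d)) (n : ℕ) :
    dist ((S.next y)^[n] u) ((S.next y')^[n] u) ≤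
      (∑ i ∈ Finset.range n, ((S.l : ℝ) * (S.b - S.a)) ^ i) * dist y y' := by
  have hL0 : (0 : ℝ) ≤ (S.l : ℝ) * (S.b - S.a) :=
    mul_nonneg S.l.coe_nonneg (by linarith [S.hab])
  induction n with
  | zero => simp
  | succ n ih =>
    rw [iterate_succ_apply', iterate_succ_apply', geom_sum_succ]
    calc dist (S.next y ((S.next y)^[n] u)) (S.next y' ((S.next y')^[n] u))
        ≤ dist (S.next y ((S.next y)^[n] u)) (S.next y ((S.next y')^[n] u))
          + dist (S.next y ((S.next y')^[n] u)) (S.next y' ((S.next y')^[n] u)) :=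
          dist_triangle _ _ _
      _ ≤ ((S.l : ℝ) * (S.b - S.a)) * dist ((S.next y)^[n] u) ((S.next y')^[n] u)
          + dist y y' := add_le_add (S.next_lipschitz _ _ _) (S.dist_next_next _ _ _)
      _ ≤ ((S.l : ℝ) * (S.b - S.a)) *
            ((∑ i ∈ Finset.range n, ((S.l : ℝ) * (S.b - S.a)) ^ i) * dist y y')
          + dist y y' := by gcongr
      _ = (((S.l : ℝ) * (S.b - S.a)) * (∑ i ∈ Finset.range n, ((S.l : ℝ) * (S.b - S.a)) ^ i)
            + 1) * dist y y' := by ring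

lemma dist_fixed_le : ∃ C : ℝ, 0 ≤ C ∧ ∀ (y y' : Euc d) (u v : C(Set.Icc S.a S.b, Euc d)),
    S.next y u = u → S.next y' v = v → dist u v ≤ C * dist y y' := by
  obtain ⟨N, K, hK⟩ := S.exists_contracting
  have h1K : (0 : ℝ) < 1 - K := (hK 0).one_sub_K_pos
  have hSg0 : (0 : ℝ) ≤ ∑ i ∈ Finset.range N, ((S.l : ℝ) * (S.b - S.a)) ^ i :=
    Finset.sum_nonneg fun i _ =>
      pow_nonneg (mul_nonneg S.l.coe_nonneg (by linarith [S.hab])) i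
  refine ⟨(∑ i ∈ Finset.range N, ((S.l : ℝ) * (S.b - S.a)) ^ i) / (1 - K),
    div_nonneg hSg0 h1K.le, fun y y' u v hu hv => ?_⟩
  have hb : ∀ z, dist ((S.next y)^[N] z) ((S.next y')^[N] z) ≤
      (∑ i ∈ Finset.range N, ((S.l : ℝ) * (S.b - S.a)) ^ i) * dist y y' :=
    fun z => S.dist_iterate_y y y' z N
  have := (hK y).dist_fixedPoint_fixedPoint_of_dist_le' ((S.next y')^[N])
    (Function.IsFixedPt.iterate hu N) (Function.IsFixedPt.iterate hv N) hb
  rw [div_mul_eq_mul_div]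
  exact this

def shrink (a' b' : ℝ) (hab' : a' ≤ b') (hc' : S.c ∈ Set.Icc a' b') : Setup d :=
  { S with a := a', b := b', hab := hab', hc := hc' }

def restrict {a' b' : ℝ} (hsub : Set.Icc a' b' ⊆ Set.Icc S.a S.b)
    (u : C(Set.Icc S.a S.b, Euc d)) : C(Set.Icc a' b', Euc d) :=
  u.comp ⟨Set.inclusion hsub, continuous_inclusion hsub⟩

lemma shrink_fixed {a' b' : ℝ} (hab' : a' ≤ b') (hsub : Set.Icc a' b' ⊆ Set.Icc S.a S.b)
    (hc' : S.c ∈ Set.Icc a' b') {y : Euc d} {u : C(Set.Icc S.a S.b, Euc d)}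
    (hu : S.next y u = u) :
    (S.shrink a' b' hab' hc').next y (S.restrict hsub u) = S.restrict hsub u := by
  refine ContinuousMap.ext fun τ => ?_
  have hτ : (τ : ℝ) ∈ Set.Icc S.a S.b := hsub τ.2
  have key : u ⟨τ, hτ⟩ = y + ∫ s in S.c..(τ : ℝ), S.rhs (S.ext u) s := by
    conv_lhs => rw [← hu]
    rfl
  refine Eq.trans ?_ key.symm
  show y + (∫ s in S.c..(τ : ℝ),
      (S.shrink a' b' hab' hc').rhs ((S.shrink a' b' hab' hc').ext (S.restrict hsub u)) s)
    = y + ∫ s in S.c..(τ : ℝ), S.rhs (S.ext u) s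
  congr 1
  refine intervalIntegral.integral_congr fun s hs => ?_
  have hs' : s ∈ Set.Icc a' b' := Set.uIcc_subset_Icc hc' τ.2 hs
  have hs'' : s ∈ Set.Icc S.a S.b := hsub hs'
  show (S.shrink a' b' hab' hc').rhs ((S.shrink a' b' hab' hc').ext (S.restrict hsub u)) s
      = S.rhs (S.ext u) s
  have e1 : (S.shrink a' b' hab' hc').ext (S.restrict hsub u) s = u ⟨s, hs''⟩ := by
    rw [ext_of_mem _ _ hs']; rfl
  have e2 : S.ext u s = u ⟨s, hs''⟩ := S.ext_of_mem u hs''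
  show (S.shrink a' b' hab' hc').f s ((S.shrink a' b' hab' hc').ext (S.restrict hsub u) s)
      + (S.shrink a' b' hab' hc').ρ • (S.shrink a' b' hab' hc').ξ s
      = S.f s (S.ext u s) + S.ρ • S.ξ s
  rw [e1, e2]
  rfl

end Setup

structure Data (d : ℕ) where
  f : ℝ → Euc d → Euc d
  ρ : ℝ
  ξ : ℝ → Euc d
  l : NNReal
  hf : Continuous fun p : ℝ × Euc d => f p.1 p.2
  hlip : ∀ t : ℝ, LipschitzWith l (f t)
  hξm : Measurable ξ
  hξb : ∀ s : ℝ, ‖ξ s‖ ≤ 1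

namespace Data

variable {d : ℕ} (P : Data d) (t : ℝ) (y : Euc d)

def stp (m : ℕ) : Setup d :=
  { f := P.f, ρ := P.ρ, ξ := P.ξ, l := P.l, hf := P.hf, hlip := P.hlip,
    hξm := P.hξm, hξb := P.hξb,
    a := t - ((m : ℝ) + 1), b := t + ((m : ℝ) + 1), c := t,
    hab := by have : (0 : ℝ) ≤ m := Nat.cast_nonneg m; linarith,
    hc := ⟨by have : (0 : ℝ) ≤ m := Nat.cast_nonneg m; linarith,
           by have : (0 : ℝ) ≤ m := Nat.cast_nonneg m; linarith⟩ }

lemma mem_stp {m : ℕ} {s : ℝ} (h : |s - t| ≤ (m : ℝ) + 1) :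
    s ∈ Set.Icc (t - ((m : ℝ) + 1)) (t + ((m : ℝ) + 1)) := by
  rw [abs_sub_le_iff] at h
  exact ⟨by linarith [h.2], by linarith [h.1]⟩

def sol (m : ℕ) : C(Set.Icc (t - ((m : ℝ) + 1)) (t + ((m : ℝ) + 1)), Euc d) :=
  ((P.stp t m).exists_fixed y).choose

lemma sol_fixed (m : ℕ) : (P.stp t m).next y (P.sol t y m) = P.sol t y m :=
  ((P.stp t m).exists_fixed y).choose_spec

lemma sol_eval {m m' : ℕ} (hmm : m ≤ m') (s : ℝ)
    (hs : s ∈ Set.Icc (t - ((m : ℝ) + 1)) (t + ((m : ℝ) + 1)))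
    (hs' : s ∈ Set.Icc (t - ((m' : ℝ) + 1)) (t + ((m' : ℝ) + 1))) :
    P.sol t y m ⟨s, hs⟩ = P.sol t y m' ⟨s, hs'⟩ := by
  have hcast : ((m : ℝ)) ≤ (m' : ℝ) := Nat.cast_le.2 hmm
  have hsub : Set.Icc (t - ((m : ℝ) + 1)) (t + ((m : ℝ) + 1)) ⊆
      Set.Icc (t - ((m' : ℝ) + 1)) (t + ((m' : ℝ) + 1)) :=
    Set.Icc_subset_Icc (by linarith) (by linarith)
  have hfix : (P.stp t m).next y ((P.stp t m').restrict hsub (P.sol t y m'))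
      = (P.stp t m').restrict hsub (P.sol t y m') :=
    (P.stp t m').shrink_fixed (P.stp t m).hab hsub (P.stp t m).hc (P.sol_fixed t y m')
  have heq := (P.stp t m).fixed_unique hfix (P.sol_fixed t y m)
  calc P.sol t y m ⟨s, hs⟩ = (P.stp t m').restrict hsub (P.sol t y m') ⟨s, hs⟩ := by
        exact (DFunLike.congr_fun heq ⟨s, hs⟩).symm
    _ = P.sol t y m' ⟨s, hs'⟩ := rfl

def z : ℝ → Euc d := fun s =>
  P.sol t y ⌈|s - t|⌉₊ ⟨s, mem_stp t ((Nat.le_ceil _).trans (by linarith))⟩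

lemma z_eval (m : ℕ) (s : ℝ)
    (hs : s ∈ Set.Icc (t - ((m : ℝ) + 1)) (t + ((m : ℝ) + 1))) :
    P.z t y s = P.sol t y m ⟨s, hs⟩ := by
  set m₀ := ⌈|s - t|⌉₊ with hm₀
  have h₀ : |s - t| ≤ ((max m₀ m : ℕ) : ℝ) + 1 := by
    have h1 : |s - t| ≤ (m₀ : ℝ) := by rw [hm₀]; exact Nat.le_ceil _
    have h2 : ((m₀ : ℕ) : ℝ) ≤ ((max m₀ m : ℕ) : ℝ) := Nat.cast_le.2 (le_max_left _ _)
    linarith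
  have hsmax : s ∈ Set.Icc (t - (((max m₀ m : ℕ) : ℝ) + 1)) (t + (((max m₀ m : ℕ) : ℝ) + 1)) :=
    mem_stp t h₀
  exact (P.sol_eval t y (le_max_left m₀ m) s _ hsmax).trans
    (P.sol_eval t y (le_max_right m₀ m) s hs hsmax).symm

lemma z_anchor : P.z t y t = y := by
  have h0 : t ∈ Set.Icc (t - ((0 : ℕ) + 1 : ℝ)) (t + ((0 : ℕ) + 1 : ℝ)) :=
    mem_stp t (by simp)
  have hfix := P.sol_fixed t y 0
  have hval : (P.sol t y 0) ⟨t, h0⟩ = y := by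
    conv_lhs => rw [← hfix]
    show y + ∫ s in t..t, _ = y
    simp
  exact (P.z_eval t y 0 t h0).trans hval

lemma z_cont : Continuous (P.z t y) := by
  rw [continuous_iff_continuousAt]; intro s₀
  set m := ⌈|s₀ - t|⌉₊ with hm
  have hball : ∀ s ∈ Metric.ball s₀ 1,
      s ∈ Set.Icc (t - ((m : ℝ) + 1)) (t + ((m : ℝ) + 1)) := by
    intro s hs
    apply mem_stp t
    have h1 : |s - s₀| < 1 := by rw [← Real.dist_eq]; exact hs
    have h2 := Nat.le_ceil |s₀ - t|
    have h3 := abs_sub_le s s₀ t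
    linarith
  have hw : Continuous fun s => P.sol t y m (Set.projIcc _ _ (P.stp t m).hab s) :=
    (P.sol t y m).continuous.comp continuous_projIcc
  refine hw.continuousAt.congr ?_
  filter_upwards [Metric.ball_mem_nhds s₀ one_pos] with s hs
  rw [P.z_eval t y m s (hball s hs)]
  exact congrArg (P.sol t y m) (Set.projIcc_of_mem (P.stp t m).hab (hball s hs))

lemma z_traj_eq (p q : ℝ) :
    P.z t y q = P.z t y p + ∫ s in p..q, (P.f s (P.z t y s) + P.ρ • P.ξ s) := by
  set m := ⌈|p - t|⌉₊ + ⌈|q - t|⌉₊ with hm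
  have hple : ((⌈|p - t|⌉₊ : ℕ) : ℝ) ≤ (m : ℝ) := by exact_mod_cast Nat.le_add_right _ _
  have hqle : ((⌈|q - t|⌉₊ : ℕ) : ℝ) ≤ (m : ℝ) := by exact_mod_cast Nat.le_add_left _ _
  have hp : p ∈ Set.Icc (t - ((m : ℝ) + 1)) (t + ((m : ℝ) + 1)) :=
    mem_stp t ((Nat.le_ceil _).trans (by linarith))
  have hq : q ∈ Set.Icc (t - ((m : ℝ) + 1)) (t + ((m : ℝ) + 1)) :=
    mem_stp t ((Nat.le_ceil _).trans (by linarith))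
  have hfix := P.sol_fixed t y m
  have hup : (P.sol t y m) ⟨p, hp⟩
      = y + ∫ s in t..p, (P.stp t m).rhs ((P.stp t m).ext (P.sol t y m)) s := by
    conv_lhs => rw [← hfix]
    rfl
  have huq : (P.sol t y m) ⟨q, hq⟩
      = y + ∫ s in t..q, (P.stp t m).rhs ((P.stp t m).ext (P.sol t y m)) s := by
    conv_lhs => rw [← hfix]
    rfl
  have hGint : ∀ p' q' : ℝ,
      IntervalIntegrable ((P.stp t m).rhs ((P.stp t m).ext (P.sol t y m))) volume p' q' :=
    fun p' q' => (P.stp t m).rhs_intInt ((P.stp t m).continuous_ext (P.sol t y m)) p' q'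
  have hsplit : (∫ s in t..q, (P.stp t m).rhs ((P.stp t m).ext (P.sol t y m)) s)
        - ∫ s in t..p, (P.stp t m).rhs ((P.stp t m).ext (P.sol t y m)) s
      = ∫ s in p..q, (P.stp t m).rhs ((P.stp t m).ext (P.sol t y m)) s :=
    integral_interval_sub_left (hGint t q) (hGint t p)
  have hcong : (∫ s in p..q, (P.stp t m).rhs ((P.stp t m).ext (P.sol t y m)) s)
      = ∫ s in p..q, (P.f s (P.z t y s) + P.ρ • P.ξ s) := by
    refine intervalIntegral.integral_congr fun s hs => ?_
    have hsm : s ∈ Set.Icc (t - ((m : ℝ) + 1)) (t + ((m : ℝ) + 1)) :=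
      Set.uIcc_subset_Icc hp hq hs
    show P.f s ((P.stp t m).ext (P.sol t y m) s) + P.ρ • P.ξ s = _
    have hes : (P.stp t m).ext (P.sol t y m) s = P.z t y s :=
      ((P.stp t m).ext_of_mem (P.sol t y m) hsm).trans (P.z_eval t y m s hsm).symm
    rw [hes]
  rw [P.z_eval t y m q hq, P.z_eval t y m p hp, hup, huq, ← hcong, ← hsplit]
  abel

lemma z_isTrajectory : Continuous (P.z t y) ∧
    ∀ p q : ℝ, P.z t y q = P.z t y p + ∫ s in p..q, (P.f s (P.z t y s) + P.ρ • P.ξ s) :=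
  ⟨P.z_cont t y, fun p q => P.z_traj_eq t y p q⟩

lemma dist_traj (t₀ : ℝ) : ∃ C : ℝ, 0 ≤ C ∧ ∀ x x' : ℝ → Euc d,
    (Continuous x ∧ ∀ p q : ℝ, x q = x p + ∫ s in p..q, (P.f s (x s) + P.ρ • P.ξ s)) →
    (Continuous x' ∧ ∀ p q : ℝ, x' q = x' p + ∫ s in p..q, (P.f s (x' s) + P.ρ • P.ξ s)) →
    ‖x t₀ - x' t₀‖ ≤ C * ‖x t - x' t‖ := by
  set m := ⌈|t₀ - t|⌉₊ with hm
  set S := P.stp t m with hS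
  obtain ⟨C, hC0, hC⟩ := S.dist_fixed_le
  refine ⟨C, hC0, fun x x' hx hx' => ?_⟩
  have ht : t ∈ Set.Icc S.a S.b := S.hc
  have ht₀ : t₀ ∈ Set.Icc S.a S.b := mem_stp t ((Nat.le_ceil _).trans (by linarith))
  have key : ∀ (w : ℝ → Euc d) (hw1 : Continuous w),
      (∀ p q : ℝ, w q = w p + ∫ s in p..q, (P.f s (w s) + P.ρ • P.ξ s)) →
      S.next (w t) ⟨fun τ => w τ.1, hw1.comp continuous_subtype_val⟩
        = ⟨fun τ => w τ.1, hw1.comp continuous_subtype_val⟩ := by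
    intro w hw1 hw2
    refine ContinuousMap.ext fun τ => ?_
    show w t + ∫ s in t..(τ : ℝ),
        S.rhs (S.ext ⟨fun τ => w τ.1, hw1.comp continuous_subtype_val⟩) s = w τ.1
    rw [hw2 t τ.1]
    congr 1
    refine intervalIntegral.integral_congr fun s hs => ?_
    have hsm : s ∈ Set.Icc S.a S.b := Set.uIcc_subset_Icc ht τ.2 hs
    show P.f s (S.ext ⟨fun τ => w τ.1, hw1.comp continuous_subtype_val⟩ s) + P.ρ • P.ξ s
        = P.f s (w s) + P.ρ • P.ξ s
    have hes : S.ext ⟨fun τ => w τ.1, hw1.comp continuous_subtype_val⟩ s = w s :=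
      S.ext_of_mem _ hsm
    rw [hes]
  have h1 := key x hx.1 hx.2
  have h2 := key x' hx'.1 hx'.2
  have := hC (x t) (x' t) _ _ h1 h2
  calc ‖x t₀ - x' t₀‖
      = dist ((⟨fun τ => x τ.1, hx.1.comp continuous_subtype_val⟩ :
          C(Set.Icc S.a S.b, Euc d)) ⟨t₀, ht₀⟩)
        ((⟨fun τ => x' τ.1, hx'.1.comp continuous_subtype_val⟩ :
          C(Set.Icc S.a S.b, Euc d)) ⟨t₀, ht₀⟩) := by rw [dist_eq_norm]; rfl
    _ ≤ dist (⟨fun τ => x τ.1, hx.1.comp continuous_subtype_val⟩ :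
          C(Set.Icc S.a S.b, Euc d))
        (⟨fun τ => x' τ.1, hx'.1.comp continuous_subtype_val⟩ :
          C(Set.Icc S.a S.b, Euc d)) := ContinuousMap.dist_apply_le_dist _
    _ ≤ C * dist (x t) (x' t) := this
    _ = C * ‖x t - x' t‖ := by rw [dist_eq_norm]

end Data
end AvoidAux


open intervalIntegral in
/-- Trajectories starting in the interior of an invariant set cannot reach its boundary
in finite time. -/
theorem interior_trajectories_avoid_boundary
    (d : ℕ) (hd : 1 ≤ d)
    (f : ℝ → Euc d → Euc d)
    (hf : Continuous fun p : ℝ × Euc d => f p.1 p.2)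
    (l : NNReal) (hlip : ∀ t : ℝ, LipschitzWith l (f t))
    (ρ : ℝ) (hρ : 0 < ρ)
    (M : ℝ → Set (Euc d))
    (hMne : ∀ t : ℝ, (M t).Nonempty)
    (hMcp : ∀ t : ℝ, IsCompact (M t))
    (hMinv : ∀ t₀ t : ℝ, t₀ ≤ t → reachNL d f ρ t t₀ (M t₀) = M t) :
    ∀ t₀ t : ℝ, t₀ < t → ∀ ξ ∈ ctrlSet d, ∀ x : ℝ → Euc d,
      IsTrajectory d f ρ ξ x → x t₀ ∈ interior (M t₀) → x t ∉ frontier (M t) := by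
  intro t₀ t ht ξ hξ x hx hx₀
  set P : AvoidAux.Data d := ⟨f, ρ, ξ, l, hf, hlip, hξ.1, hξ.2⟩ with hP
  obtain ⟨C, hC0, hC⟩ := P.dist_traj t t₀
  obtain ⟨ε, hε0, hball⟩ := Metric.isOpen_iff.1 isOpen_interior (x t₀) hx₀
  set δ := ε / (C + 1) with hδ
  have hC1 : (0 : ℝ) < C + 1 := by linarith
  have hδ0 : 0 < δ := div_pos hε0 hC1
  have hsub : Metric.ball (x t) δ ⊆ M t := by
    intro y hy
    have hztraj := P.z_isTrajectory t y
    have hzeq : ‖P.z t y t₀ - x t₀‖ ≤ C * ‖P.z t y t - x t‖ :=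
      hC (P.z t y) x hztraj ⟨hx.1, fun p q => hx.2 p q⟩
    have hzt : P.z t y t = y := P.z_anchor t y
    have h1 : dist (P.z t y t₀) (x t₀) < ε := by
      rw [dist_eq_norm]
      have h2 : ‖P.z t y t - x t‖ < δ := by
        rw [hzt, ← dist_eq_norm]
        exact Metric.mem_ball.1 hy
      calc ‖P.z t y t₀ - x t₀‖ ≤ C * ‖P.z t y t - x t‖ := hzeq
        _ ≤ C * δ := mul_le_mul_of_nonneg_left h2.le hC0
        _ < (C + 1) * δ := mul_lt_mul_of_pos_right (lt_add_one C) hδ0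
        _ = ε := by rw [hδ]; field_simp
    have hz₀ : P.z t y t₀ ∈ M t₀ := interior_subset (hball (Metric.mem_ball.2 h1))
    rw [← hMinv t₀ t ht.le]
    exact ⟨ξ, hξ, P.z t y, ⟨hztraj.1, fun p q => hztraj.2 p q⟩, hz₀, hzt.symm⟩
  intro hfr
  have hint : x t ∈ interior (M t) :=
    mem_interior.2 ⟨Metric.ball (x t) δ, hsub, Metric.isOpen_ball, Metric.mem_ball_self hδ0⟩
  rw [← closure_diff_interior] at hfr
  exact hfr.2 hint
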